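/- If f : I → ℝ is hyperbolic p-convex on an open interval I and twice continuously differentiable, then f''(x) - p²f(x) ≥ 0 for all x ∈ I. -/

import Mathlib

open Real MeasureTheory

def HypPConvexOn (p : ℝ) (I : Set ℝ) (f : ℝ → ℝ) : Prop :=
  ∀ a ∈ I, ∀ b ∈ I, a < b → ∀ x ∈ Set.Icc a b,
    f x ≤ (Real.sinh (p * (b - x)) / Real.sinh (p * (b - a))) * f a +
          (Real.sinh (p * (x - a)) / Real.sinh (p * (b - a))) * f b

def HypPConcaveOn (p : ℝ) (I : Set ℝ) (f : ℝ → ℝ) : Prop :=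
  ∀ a ∈ I, ∀ b ∈ I, a < b → ∀ x ∈ Set.Icc a b,
    f x ≥ (Real.sinh (p * (b - x)) / Real.sinh (p * (b - a))) * f a +
          (Real.sinh (p * (x - a)) / Real.sinh (p * (b - a))) * f b

private lemma hasDerivAt_sinh_aff (p r y : ℝ) :
    HasDerivAt (fun t : ℝ => Real.sinh (p * (r - t))) (-p * Real.cosh (p * (r - y))) y := by
  have h1 : HasDerivAt (fun t : ℝ => p * (r - t)) (-p) y := by
    simpa using ((hasDerivAt_id y).const_sub r).const_mul p
  simpa [mul_comm, Function.comp_def] using (Real.hasDerivAt_sinh (p * (r - y))).comp y h1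

private lemma hasDerivAt_cosh_aff (p r y : ℝ) :
    HasDerivAt (fun t : ℝ => Real.cosh (p * (r - t))) (-p * Real.sinh (p * (r - y))) y := by
  have h1 : HasDerivAt (fun t : ℝ => p * (r - t)) (-p) y := by
    simpa using ((hasDerivAt_id y).const_sub r).const_mul p
  simpa [mul_comm, Function.comp_def] using (Real.hasDerivAt_cosh (p * (r - y))).comp y h1

private lemma hasDerivAt_sinh_aff' (p r y : ℝ) :
    HasDerivAt (fun t : ℝ => Real.sinh (p * (t - r))) (p * Real.cosh (p * (y - r))) y := by
  have h1 : HasDerivAt (fun t : ℝ => p * (t - r)) p y := by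
    simpa using ((hasDerivAt_id y).sub_const r).const_mul p
  simpa [mul_comm, Function.comp_def] using (Real.hasDerivAt_sinh (p * (y - r))).comp y h1

private lemma hasDerivAt_cosh_aff' (p r y : ℝ) :
    HasDerivAt (fun t : ℝ => Real.cosh (p * (t - r))) (p * Real.sinh (p * (y - r))) y := by
  have h1 : HasDerivAt (fun t : ℝ => p * (t - r)) p y := by
    simpa using ((hasDerivAt_id y).sub_const r).const_mul p
  simpa [mul_comm, Function.comp_def] using (Real.hasDerivAt_cosh (p * (y - r))).comp y h1

theorem hyp_convex_implies_second_order
    (A B p : ℝ) (hp : p ≠ 0) (f f' f'' : ℝ → ℝ)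
    (hf' : ∀ x ∈ Set.Ioo A B, HasDerivAt f (f' x) x)
    (hf'' : ∀ x ∈ Set.Ioo A B, HasDerivAt f' (f'' x) x)
    (hcont : ContinuousOn f'' (Set.Ioo A B))
    (hconv : HypPConvexOn p (Set.Ioo A B) f) :
    ∀ x ∈ Set.Ioo A B, f'' x - p ^ 2 * f x ≥ 0 := by
  intro x₀ hx₀
  by_contra hlt
  push_neg at hlt
  -- g = f'' - p² f is continuous at x₀ and negative there
  have hopen : IsOpen (Set.Ioo A B) := isOpen_Ioo
  have hfc : ContinuousOn f (Set.Ioo A B) := fun y hy => ((hf' y hy).continuousAt).continuousWithinAt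
  have hgc : ContinuousAt (fun y => f'' y - p ^ 2 * f y) x₀ := by
    have h1 : ContinuousAt f'' x₀ := (hcont x₀ hx₀).continuousAt (hopen.mem_nhds hx₀)
    have h2 : ContinuousAt f x₀ := (hf' x₀ hx₀).continuousAt
    exact h1.sub (continuousAt_const.mul h2)
  have hneg : ∀ᶠ y in nhds x₀, f'' y - p ^ 2 * f y < 0 :=
    hgc.eventually_lt continuousAt_const hlt
  have hIoo : ∀ᶠ y in nhds x₀, y ∈ Set.Ioo A B := hopen.eventually_mem hx₀
  obtain ⟨ε, hε, hball⟩ := Metric.eventually_nhds_iff.1 (hneg.and hIoo)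
  set a := x₀ - ε / 2 with ha_def
  set b := x₀ + ε / 2 with hb_def
  clear_value a b
  have hab : a < b := by rw [ha_def, hb_def]; linarith
  have hsub : Set.Icc a b ⊆ {y | (f'' y - p ^ 2 * f y < 0) ∧ y ∈ Set.Ioo A B} := by
    intro y hy
    apply hball
    obtain ⟨hy1, hy2⟩ := hy
    rw [ha_def] at hy1
    rw [hb_def] at hy2
    rw [Real.dist_eq, abs_lt]
    constructor <;> linarith
  have haI : a ∈ Set.Ioo A B := (hsub ⟨le_refl a, hab.le⟩).2
  have hbI : b ∈ Set.Ioo A B := (hsub ⟨hab.le, le_refl b⟩).2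
  have hIccI : Set.Icc a b ⊆ Set.Ioo A B := fun y hy => (hsub hy).2
  have hs : Real.sinh (p * (b - a)) ≠ 0 := by
    intro h
    rcases Real.sinh_eq_zero.mp h with h0
    have : p * (b - a) ≠ 0 := mul_ne_zero hp (by linarith)
    exact this h0
  -- the comparison function
  set c : ℝ → ℝ := fun y =>
    (Real.sinh (p * (b - y)) / Real.sinh (p * (b - a))) * f a +
    (Real.sinh (p * (y - a)) / Real.sinh (p * (b - a))) * f b with hc_def
  set c' : ℝ → ℝ := fun y =>
    (-p * Real.cosh (p * (b - y)) / Real.sinh (p * (b - a))) * f a +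
    (p * Real.cosh (p * (y - a)) / Real.sinh (p * (b - a))) * f b with hc'_def
  have hcD : ∀ y : ℝ, HasDerivAt c (c' y) y := by
    intro y
    exact (((hasDerivAt_sinh_aff p b y).div_const _).mul_const (f a)).add
      (((hasDerivAt_sinh_aff' p a y).div_const _).mul_const (f b))
  have hc'D : ∀ y : ℝ, HasDerivAt c' (p ^ 2 * c y) y := by
    intro y
    have h1 := ((((hasDerivAt_cosh_aff p b y).const_mul (-p)).div_const
        (Real.sinh (p * (b - a)))).mul_const (f a)).add
      ((((hasDerivAt_cosh_aff' p a y).const_mul p).div_const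
        (Real.sinh (p * (b - a)))).mul_const (f b))
    convert h1 using 1
    · rfl
    · rfl
    · rfl
    simp only [hc_def]
    ring
  -- w = c - f
  set w : ℝ → ℝ := fun y => c y - f y with hw_def
  have hwnonneg : ∀ y ∈ Set.Icc a b, 0 ≤ w y :=
    fun y hy => sub_nonneg.2 (hconv a haI b hbI hab y hy)
  have hwD : ∀ y ∈ Set.Ioo A B, HasDerivAt w (c' y - f' y) y :=
    fun y hy => (hcD y).sub (hf' y hy)
  have hwD2 : ∀ y ∈ Set.Ioo A B, HasDerivAt (fun z => c' z - f' z) (p ^ 2 * c y - f'' y) y :=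
    fun y hy => (hc'D y).sub (hf'' y hy)
  -- deriv identities
  have hderiv1 : Set.EqOn (deriv w) (fun z => c' z - f' z) (Set.Ioo A B) :=
    fun y hy => (hwD y hy).deriv
  have hderiv2 : ∀ y ∈ Set.Ioo A B, deriv^[2] w y = p ^ 2 * c y - f'' y := by
    intro y hy
    have heq : deriv w =ᶠ[nhds y] fun z => c' z - f' z :=
      Filter.eventuallyEq_of_mem (hopen.mem_nhds hy) hderiv1
    simp only [Function.iterate_succ, Function.iterate_zero, Function.comp_apply, id_eq]
    rw [Filter.EventuallyEq.deriv_eq heq]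
    exact (hwD2 y hy).deriv
  -- strict convexity of w on Icc a b
  have hwc : ContinuousOn w (Set.Icc a b) := by
    intro y hy
    exact ((hwD y (hIccI hy)).continuousAt).continuousWithinAt
  have hconvx : StrictConvexOn ℝ (Set.Icc a b) w := by
    apply strictConvexOn_of_deriv2_pos (convex_Icc a b) hwc
    intro y hy
    rw [interior_Icc] at hy
    have hyIcc : y ∈ Set.Icc a b := Set.Ioo_subset_Icc_self hy
    have hyI : y ∈ Set.Ioo A B := hIccI hyIcc
    rw [hderiv2 y hyI]
    have h1 : f'' y - p ^ 2 * f y < 0 := (hsub hyIcc).1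
    have h2 : 0 ≤ w y := hwnonneg y hyIcc
    have h3 : 0 ≤ p ^ 2 * w y := mul_nonneg (sq_nonneg p) h2
    simp only [hw_def] at h3
    nlinarith
  -- w a = w b = 0
  have hwa : w a = 0 := by
    simp only [hw_def, hc_def]
    rw [show p * (a - a) = 0 by ring, Real.sinh_zero]
    field_simp
    ring
  have hwb : w b = 0 := by
    simp only [hw_def, hc_def]
    rw [show p * (b - b) = 0 by ring, Real.sinh_zero]
    field_simp
    ring
  -- midpoint contradiction
  have hmem_a : a ∈ Set.Icc a b := ⟨le_refl a, hab.le⟩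
  have hmem_b : b ∈ Set.Icc a b := ⟨hab.le, le_refl b⟩
  have hmid := hconvx.2 hmem_a hmem_b hab.ne (by norm_num : (0:ℝ) < 1/2)
    (by norm_num : (0:ℝ) < 1/2) (by norm_num)
  have hx₀eq : (1/2 : ℝ) • a + (1/2 : ℝ) • b = x₀ := by
    rw [ha_def, hb_def]; simp [smul_eq_mul]; ring
  rw [hx₀eq, hwa, hwb] at hmid
  have hx₀Icc : x₀ ∈ Set.Icc a b := ⟨by rw [ha_def]; linarith, by rw [hb_def]; linarith⟩
  have := hwnonneg x₀ hx₀Icc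
  simp at hmid
  linarith
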